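/- Let N ∈ ℕ, 1 ≤ n⁻ ≤ N, β ∈ (0,1), λ > 0, ȳ > 0, let W⁻ be a probability weighting function, let h⁻ be the loss decision weights, and let v satisfy 0 ≤ v ≤ ȳ·∑_{i=1}^{n⁻} h⁻_i. Then the optimal value (minimum) of the price-constrained loss subproblem equals the minimum, over all pairs of integers ℓ₁, ℓ₂ with 0 ≤ ℓ₁ < ℓ₂ ≤ n⁻ satisfying ȳ·∑_{i=1}^{ℓ₁} h⁻_i ≤ v ≤ ȳ·∑_{i=1}^{ℓ₂} h⁻_i, of the quantity −ℓ₁·(ȳ/λ)^{1/β} − (ℓ₂ − ℓ₁)·( (v − ȳ·∑_{i=1}^{ℓ₁} h⁻_i) / (λ·∑_{i=ℓ₁+1}^{ℓ₂} h⁻_i) )^{1/β}. -/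

import Mathlib

open Finset

/-- An inverse S-shaped function on `[0,1]`: strictly increasing, continuously
differentiable, with a derivative strictly decreasing then strictly increasing. -/
def InverseSShaped (W : ℝ → ℝ) : Prop :=
  StrictMonoOn W (Set.Icc (0 : ℝ) 1) ∧
  ContDiffOn ℝ 1 W (Set.Icc (0 : ℝ) 1) ∧
  ∃ x₀ ∈ Set.Icc (0 : ℝ) 1,
    StrictAntiOn (deriv W) (Set.Icc (0 : ℝ) x₀) ∧ StrictMonoOn (deriv W) (Set.Icc x₀ 1)

/-- A probability weighting function: inverse S-shaped with `W 0 = 0` and `W 1 = 1`. -/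
def IsPWF (W : ℝ → ℝ) : Prop :=
  InverseSShaped W ∧ W 0 = 0 ∧ W 1 = 1

/-- Loss decision weights: `h⁻_i = W⁻(i/N) − W⁻((i−1)/N)` for `i = 1,…,n⁻`. -/
noncomputable def lossW (W : ℝ → ℝ) (N i : ℕ) : ℝ :=
  W ((i : ℝ) / N) - W (((i : ℝ) - 1) / N)

/-- Feasibility for the loss subproblem: `y_1 ≥ y_2 ≥ … ≥ y_n ≥ 0` and `∑ h⁻_i y_i = v`. -/
def LossFeasible (W : ℝ → ℝ) (N n : ℕ) (v : ℝ) (y : ℕ → ℝ) : Prop :=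
  0 ≤ y n ∧ (∀ i ∈ Finset.Icc 1 (n - 1), y (i + 1) ≤ y i) ∧
  ∑ i ∈ Finset.Icc 1 n, lossW W N i * y i = v

/-- Feasibility for the price-constrained loss subproblem:
`ȳ ≥ y_1 ≥ y_2 ≥ … ≥ y_n ≥ 0` and `∑ h⁻_i y_i = v`. -/
def PLossFeasible (W : ℝ → ℝ) (N n : ℕ) (ybar v : ℝ) (y : ℕ → ℝ) : Prop :=
  y 1 ≤ ybar ∧ 0 ≤ y n ∧ (∀ i ∈ Finset.Icc 1 (n - 1), y (i + 1) ≤ y i) ∧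
  ∑ i ∈ Finset.Icc 1 n, lossW W N i * y i = v

/- ------------------ auxiliary lemmas ------------------- -/

lemma lossW_pos {W : ℝ → ℝ} {N i : ℕ} (hW : IsPWF W) (h1 : 1 ≤ i) (hiN : i ≤ N) :
    0 < lossW W N i := by
  have hN : (0:ℝ) < N := by
    have : 1 ≤ N := le_trans h1 hiN
    exact_mod_cast Nat.lt_of_lt_of_le Nat.zero_lt_one this
  have hmem1 : ((i:ℝ) - 1) / N ∈ Set.Icc (0:ℝ) 1 := by
    constructor
    · apply div_nonneg _ hN.le
      have : (1:ℝ) ≤ (i:ℝ) := by exact_mod_cast h1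
      linarith
    · rw [div_le_one hN]
      have : (i:ℝ) ≤ N := by exact_mod_cast hiN
      linarith
  have hmem2 : (i:ℝ) / N ∈ Set.Icc (0:ℝ) 1 := by
    constructor
    · positivity
    · rw [div_le_one hN]; exact_mod_cast hiN
  have hlt : ((i:ℝ) - 1) / N < (i:ℝ) / N := by
    apply div_lt_div_of_pos_right _ hN
    linarith
  have := hW.1.1 hmem1 hmem2 hlt
  unfold lossW
  linarith

/-- reindex a sum over `Icc 1 n` as a sum over `Fin n`. -/
lemma sum_Icc_one_eq_sum_fin (n : ℕ) (g : ℕ → ℝ) :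
    ∑ i ∈ Icc 1 n, g i = ∑ k : Fin n, g (k.1 + 1) := by
  have h0 : (Icc 1 n : Finset ℕ) = Ico 1 (n+1) := by
    rw [Finset.Ico_add_one_right_eq_Icc]
  rw [h0, Finset.sum_Ico_eq_sum_range, Fin.sum_univ_eq_sum_range (fun k => g (k + 1))]
  simp [add_comm]

/-- split a sum over `Icc 1 n` at `l1 ≤ l2 ≤ n`. -/
lemma sum_split3 {l1 l2 n : ℕ} (h12 : l1 ≤ l2) (h2n : l2 ≤ n) (g : ℕ → ℝ) :
    ∑ i ∈ Icc 1 n, g i =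
      (∑ i ∈ Ioc 0 l1, g i) + (∑ i ∈ Ioc l1 l2, g i) + ∑ i ∈ Ioc l2 n, g i := by
  have h0 : (Icc 1 n : Finset ℕ) = Ioc 0 n := by
    rw [← Finset.Icc_add_one_left_eq_Ioc]; rfl
  have d1 : Disjoint (Ioc (0:ℕ) l1) (Ioc l1 l2) := by
    simp [Finset.disjoint_left, Finset.mem_Ioc]; omega
  have d2 : Disjoint (Ioc (0:ℕ) l2) (Ioc l2 n) := by
    simp [Finset.disjoint_left, Finset.mem_Ioc]; omega
  rw [h0, ← Finset.Ioc_union_Ioc_eq_Ioc (Nat.zero_le l2) h2n, Finset.sum_union d2,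
    ← Finset.Ioc_union_Ioc_eq_Ioc (Nat.zero_le l1) h12, Finset.sum_union d1]

/-- chain a sequence of single steps into monotonicity. -/
lemma chain_mono {n : ℕ} {y : ℕ → ℝ} (hstep : ∀ i ∈ Icc 1 (n - 1), y (i + 1) ≤ y i) :
    ∀ i j, 1 ≤ i → i ≤ j → j ≤ n → y j ≤ y i := by
  intro i j h1 hij hjn
  induction j with
  | zero => omega
  | succ k ih =>
    rcases Nat.eq_or_lt_of_le hij with heq | hlt
    · exact le_of_eq (by rw [heq])
    · have hk : y k ≤ y i := ih (by omega) (by omega)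
      have : y (k+1) ≤ y k := hstep k (by simp only [Finset.mem_Icc]; omega)
      linarith


/-- The feasible polytope, as a subset of `Fin n → ℝ`. -/
def Kset (W : ℝ → ℝ) (N n : ℕ) (ybar v : ℝ) : Set (Fin n → ℝ) :=
  {x | (∀ k, 0 ≤ x k) ∧ (∀ k, x k ≤ ybar) ∧ (∀ k l : Fin n, k ≤ l → x l ≤ x k) ∧
    ∑ k, lossW W N (k.1 + 1) * x k = v}

/-- At an extreme point of `Kset`, all coordinates strictly between `0` and `ybar`
share a common value. -/
lemma extreme_interior_const {W : ℝ → ℝ} {N n : ℕ} {ybar v : ℝ}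
    (hW : IsPWF W) (hnN : n ≤ N) (hybar : 0 < ybar)
    {e : Fin n → ℝ} (he : e ∈ (Kset W N n ybar v).extremePoints ℝ) :
    ∀ i j : Fin n, 0 < e i → e i < ybar → 0 < e j → e j < ybar → e i = e j := by
  classical
  intro i j hi0 hi1 hj0 hj1
  by_contra hne
  obtain ⟨⟨he0, he1, hemono, hesum⟩, hext⟩ := he
  set h : Fin n → ℝ := fun k => lossW W N (k.1 + 1) with hh
  have hpos : ∀ k : Fin n, 0 < h k := fun k =>
    lossW_pos hW (by omega) (by have := k.2; omega)
  set B1 : Finset (Fin n) := univ.filter (fun k => e k = e i) with hB1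
  set B2 : Finset (Fin n) := univ.filter (fun k => e k = e j) with hB2
  set s1 : ℝ := ∑ k ∈ B2, h k with hs1def
  set s2 : ℝ := ∑ k ∈ B1, h k with hs2def
  have hs1 : 0 < s1 := Finset.sum_pos (fun k _ => hpos k) ⟨j, by simp [hB2]⟩
  have hs2 : 0 < s2 := Finset.sum_pos (fun k _ => hpos k) ⟨i, by simp [hB1]⟩
  set d : Fin n → ℝ := fun k => if e k = e i then s1 else if e k = e j then -s2 else 0
    with hd
  have hdi : d i = s1 := by simp [hd]
  have hdval : ∀ k, d k = s1 ∨ d k = -s2 ∨ d k = 0 := by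
    intro k; by_cases h1 : e k = e i
    · left; show (if e k = e i then s1 else if e k = e j then -s2 else 0) = s1
      rw [if_pos h1]
    · by_cases h2 : e k = e j
      · right; left; show (if e k = e i then s1 else if e k = e j then -s2 else 0) = -s2
        rw [if_neg h1, if_pos h2]
      · right; right; show (if e k = e i then s1 else if e k = e j then -s2 else 0) = 0
        rw [if_neg h1, if_neg h2]
  have hdabs : ∀ k, |d k| ≤ s1 + s2 := by
    intro k
    rcases hdval k with h1 | h1 | h1 <;> rw [h1]
    · rw [abs_of_nonneg hs1.le]; linarith
    · rw [abs_of_nonpos (by linarith)]; linarith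
    · rw [abs_zero]; linarith
  -- the weighted sum of the direction vanishes
  have hd_sum : ∑ k, h k * d k = 0 := by
    rw [← Finset.sum_filter_add_sum_filter_not univ (fun k => e k = e i)]
    have e1 : ∑ k ∈ univ.filter (fun k => e k = e i), h k * d k = s2 * s1 := by
      rw [hs2def, Finset.sum_mul, hB1]
      apply Finset.sum_congr rfl
      intro k hk
      simp only [Finset.mem_filter] at hk
      simp [hd, hk.2]
    have e2 : ∑ k ∈ univ.filter (fun k => ¬ e k = e i), h k * d k = s1 * (-s2) := by
      rw [← Finset.sum_filter_add_sum_filter_not (univ.filter (fun k => ¬ e k = e i))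
        (fun k => e k = e j)]
      have e3 : (univ.filter (fun k => ¬ e k = e i)).filter (fun k => e k = e j) = B2 := by
        rw [Finset.filter_filter, hB2]
        apply Finset.filter_congr
        intro k _
        constructor
        · rintro ⟨-, h2⟩; exact h2
        · intro h2; exact ⟨by rw [h2]; exact fun hc => hne hc.symm, h2⟩
      rw [e3]
      have e4 : ∑ k ∈ B2, h k * d k = s1 * (-s2) := by
        have : ∀ k ∈ B2, h k * d k = h k * (-s2) := by
          intro k hk
          simp only [hB2, Finset.mem_filter] at hk
          have hkne : ¬ e k = e i := by rw [hk.2]; exact fun hc => hne hc.symm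
          have : d k = -s2 := by
            show (if e k = e i then s1 else if e k = e j then -s2 else 0) = -s2
            rw [if_neg hkne, if_pos hk.2]
          rw [this]
        rw [Finset.sum_congr rfl this, ← Finset.sum_mul, ← hs1def]
      have e5 : ∑ k ∈ ((univ.filter (fun k => ¬ e k = e i)).filter (fun k => ¬ e k = e j)),
          h k * d k = 0 := by
        apply Finset.sum_eq_zero
        intro k hk
        simp only [Finset.mem_filter] at hk
        simp [hd, hk.1.2, hk.2]
      rw [e4, e5]; ring
    rw [e1, e2]; ring
  -- uniform positive gap
  set G : Finset ℝ :=
    ((univ ×ˢ univ : Finset (Fin n × Fin n)).filter (fun q => e q.2 < e q.1)).image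
      (fun q => e q.1 - e q.2) with hG
  set Gs : Finset ℝ :=
    insert (e i) (insert (ybar - e i) (insert (e j) (insert (ybar - e j) G))) with hGs
  have hGs_ne : Gs.Nonempty := ⟨e i, by simp [hGs]⟩
  set δ : ℝ := Gs.min' hGs_ne with hδ
  have hδpos : 0 < δ := by
    rw [hδ, Finset.lt_min'_iff]
    intro x hx
    simp only [hGs, Finset.mem_insert] at hx
    rcases hx with rfl | rfl | rfl | rfl | hx
    · exact hi0
    · linarith
    · exact hj0
    · linarith
    · simp only [hG, Finset.mem_image, Finset.mem_filter] at hx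
      obtain ⟨q, ⟨-, hq⟩, rfl⟩ := hx
      linarith
  have hδle : ∀ x ∈ Gs, δ ≤ x := fun x hx => Finset.min'_le _ x hx
  set ε : ℝ := δ / (2 * (s1 + s2)) with hε
  have hεpos : 0 < ε := by positivity
  have hεbound : ε * (s1 + s2) = δ / 2 := by
    rw [hε]; field_simp
  -- shift bound for relevant coordinates
  have hshift : ∀ (σ : ℝ), |σ| ≤ ε → ∀ k, |σ * d k| ≤ δ / 2 := by
    intro σ hσ k
    rw [abs_mul]
    calc |σ| * |d k| ≤ ε * (s1 + s2) := by
          apply mul_le_mul hσ (hdabs k) (abs_nonneg _) hεpos.le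
      _ = δ / 2 := hεbound
  -- perturbed points remain feasible
  have hfeas : ∀ (σ : ℝ), |σ| ≤ ε → (fun k => e k + σ * d k) ∈ Kset W N n ybar v := by
    intro σ hσ
    have hdzero_or : ∀ k, d k ≠ 0 → (δ ≤ e k ∧ δ ≤ ybar - e k) := by
      intro k hk
      by_cases h1 : e k = e i
      · rw [h1]
        exact ⟨hδle _ (by simp [hGs]), hδle _ (by simp [hGs])⟩
      · by_cases h2 : e k = e j
        · rw [h2]
          exact ⟨hδle _ (by simp [hGs]), hδle _ (by simp [hGs])⟩
        · exact absurd (by simp [hd, h1, h2]) hk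
    refine ⟨?_, ?_, ?_, ?_⟩
    · intro k
      show 0 ≤ e k + σ * d k
      by_cases hk : d k = 0
      · simp [hk]; exact he0 k
      · obtain ⟨hk1, -⟩ := hdzero_or k hk
        have := abs_le.mp (hshift σ hσ k)
        linarith [this.1, hδpos]
    · intro k
      show e k + σ * d k ≤ ybar
      by_cases hk : d k = 0
      · simp [hk]; exact he1 k
      · obtain ⟨-, hk2⟩ := hdzero_or k hk
        have := abs_le.mp (hshift σ hσ k)
        linarith [this.2, hδpos]
    · intro k l hkl
      show e l + σ * d l ≤ e k + σ * d k
      by_cases hekl : e l = e k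
      · have : d l = d k := by
          by_cases h1 : e k = e i
          · simp [hd, hekl, h1]
          · by_cases h2 : e k = e j
            · simp [hd, hekl, h1, h2]
            · simp [hd, hekl, h1, h2]
        rw [this, hekl]
      · have hlt : e l < e k := lt_of_le_of_ne (hemono k l hkl) hekl
        have hgap : δ ≤ e k - e l := by
          apply hδle
          simp only [hGs, Finset.mem_insert]
          right; right; right; right
          simp only [hG, Finset.mem_image, Finset.mem_filter]
          exact ⟨(k, l), ⟨by simp, hlt⟩, rfl⟩
        have h1 := abs_le.mp (hshift σ hσ k)
        have h2 := abs_le.mp (hshift σ hσ l)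
        linarith [h1.1, h2.2, hδpos]
    · have : ∑ k, h k * (e k + σ * d k) = (∑ k, h k * e k) + σ * ∑ k, h k * d k := by
        rw [Finset.mul_sum, ← Finset.sum_add_distrib]
        apply Finset.sum_congr rfl
        intro k _; ring
      rw [this, hd_sum, hesum]; ring
  -- contradiction with extremeness
  have h1 : (fun k => e k + (-ε) * d k) ∈ Kset W N n ybar v :=
    hfeas (-ε) (by rw [abs_neg, abs_of_pos hεpos])
  have h2 : (fun k => e k + ε * d k) ∈ Kset W N n ybar v :=
    hfeas ε (by rw [abs_of_pos hεpos])
  have hseg : e ∈ openSegment ℝ (fun k => e k + (-ε) * d k) (fun k => e k + ε * d k) := by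
    refine ⟨1/2, 1/2, by norm_num, by norm_num, by norm_num, ?_⟩
    funext k
    simp only [Pi.add_apply, Pi.smul_apply, smul_eq_mul]
    ring
  have hx1 := hext h1 h2 hseg
  have h3 := congrFun hx1 i
  have h4 : e i + (-ε) * d i = e i := h3
  rw [hdi] at h4
  nlinarith


/-- The value associated to a pair of integer thresholds. -/
noncomputable def pairVal (W : ℝ → ℝ) (N : ℕ) (β lam ybar v : ℝ) (l1 l2 : ℕ) : ℝ :=
  -(l1 : ℝ) * (ybar / lam) ^ (1 / β) -
    ((l2 : ℝ) - (l1 : ℝ)) *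
      ((v - ybar * ∑ i ∈ Finset.Icc 1 l1, lossW W N i) /
        (lam * ∑ i ∈ Finset.Icc (l1 + 1) l2, lossW W N i)) ^ (1 / β)

lemma sum_Icc_split (l1 l2 : ℕ) (h : l1 ≤ l2) (g : ℕ → ℝ) :
    ∑ i ∈ Icc 1 l2, g i = ∑ i ∈ Icc 1 l1, g i + ∑ i ∈ Icc (l1 + 1) l2, g i := by
  have h1 : (Icc 1 l2 : Finset ℕ) = Ioc 0 l2 := Finset.Icc_add_one_left_eq_Ioc 0 l2
  have h2 : (Icc 1 l1 : Finset ℕ) = Ioc 0 l1 := Finset.Icc_add_one_left_eq_Ioc 0 l1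
  have h3 : (Icc (l1+1) l2 : Finset ℕ) = Ioc l1 l2 := Finset.Icc_add_one_left_eq_Ioc l1 l2
  rw [h1, h2, h3, ← Finset.Ioc_union_Ioc_eq_Ioc (Nat.zero_le l1) h,
    Finset.sum_union (by simp [Finset.disjoint_left, Finset.mem_Ioc]; omega)]

/-- Every extreme point of the polytope realizes a feasible pair value. -/
lemma extreme_pair {W : ℝ → ℝ} {N n : ℕ} {β lam ybar v : ℝ}
    (hW : IsPWF W) (hn1 : 1 ≤ n) (hnN : n ≤ N)
    (hβ0 : 0 < β) (hlam : 0 < lam) (hybar : 0 < ybar)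
    {e : Fin n → ℝ} (he : e ∈ (Kset W N n ybar v).extremePoints ℝ) :
    ∃ l1 l2 : ℕ, l1 < l2 ∧ l2 ≤ n ∧
      ybar * ∑ i ∈ Icc 1 l1, lossW W N i ≤ v ∧
      v ≤ ybar * ∑ i ∈ Icc 1 l2, lossW W N i ∧
      ∑ k : Fin n, (e k / lam) ^ (1 / β) = -(pairVal W N β lam ybar v l1 l2) := by
  classical
  have hCC := extreme_interior_const hW hnN hybar he
  obtain ⟨⟨he0, he1, hemono, hesum⟩, -⟩ := he
  have hp0 : (0:ℝ) < 1 / β := by positivity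
  have hpne : (1:ℝ) / β ≠ 0 := ne_of_gt hp0
  have hlosspos : ∀ i : ℕ, 1 ≤ i → i ≤ n → 0 < lossW W N i := fun i h1 h2 =>
    lossW_pos hW h1 (le_trans h2 hnN)
  -- the two thresholds
  have hS1ne : ({l : ℕ | ∀ k : Fin n, l ≤ k.1 → e k < ybar}).Nonempty :=
    ⟨n, fun k hk => absurd k.2 (by omega)⟩
  have hS2ne : ({l : ℕ | ∀ k : Fin n, l ≤ k.1 → e k ≤ 0}).Nonempty :=
    ⟨n, fun k hk => absurd k.2 (by omega)⟩
  set l1 := sInf {l : ℕ | ∀ k : Fin n, l ≤ k.1 → e k < ybar} with hl1def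
  set l2 := sInf {l : ℕ | ∀ k : Fin n, l ≤ k.1 → e k ≤ 0} with hl2def
  have hl1mem : ∀ k : Fin n, l1 ≤ k.1 → e k < ybar := Nat.sInf_mem hS1ne
  have hl2mem : ∀ k : Fin n, l2 ≤ k.1 → e k ≤ 0 := Nat.sInf_mem hS2ne
  have hl1n : l1 ≤ n := Nat.sInf_le (fun k hk => absurd k.2 (by omega))
  have hl2n : l2 ≤ n := Nat.sInf_le (fun k hk => absurd k.2 (by omega))
  have FactB : ∀ k : Fin n, k.1 < l1 → e k = ybar := by
    intro k hk
    by_contra hne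
    have hklt : e k < ybar := lt_of_le_of_ne (he1 k) hne
    have : l1 ≤ k.1 := Nat.sInf_le (fun k' hk' =>
      lt_of_le_of_lt (hemono k k' (Fin.le_def.mpr hk')) hklt)
    omega
  have FactC : ∀ k : Fin n, l2 ≤ k.1 → e k = 0 := fun k hk =>
    le_antisymm (hl2mem k hk) (he0 k)
  have FactD : ∀ k : Fin n, k.1 < l2 → 0 < e k := by
    intro k hk
    by_contra hne
    push_neg at hne
    have : l2 ≤ k.1 := Nat.sInf_le (fun k' hk' =>
      le_trans (hemono k k' (Fin.le_def.mpr hk')) hne)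
    omega
  have h12 : l1 ≤ l2 := by
    by_contra hc
    push_neg at hc
    have hkn : l2 < n := lt_of_lt_of_le hc hl1n
    have h1 := FactB ⟨l2, hkn⟩ (show l2 < l1 from hc)
    have h2 := FactC ⟨l2, hkn⟩ (show l2 ≤ l2 from le_rfl)
    rw [h1] at h2; linarith
  -- interior value
  set c : ℝ := if hlt : l1 < l2 then e ⟨l1, lt_of_lt_of_le hlt hl2n⟩ else 0 with hcdef
  -- ℕ-indexed version of e
  set Y : ℕ → ℝ := fun i => if hi : 1 ≤ i ∧ i ≤ n then e ⟨i - 1, by omega⟩ else 0 with hY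
  have hYk : ∀ k : Fin n, Y (k.1 + 1) = e k := by
    intro k
    have hk : 1 ≤ k.1 + 1 ∧ k.1 + 1 ≤ n := ⟨by omega, by have := k.2; omega⟩
    rw [hY]
    simp only []
    rw [dif_pos hk]
    congr 1
  have hsumErw : ∀ F : ℕ → ℝ → ℝ, ∑ i ∈ Icc 1 n, F i (Y i) = ∑ k : Fin n, F (k.1+1) (e k) := by
    intro F
    rw [sum_Icc_one_eq_sum_fin n (fun i => F i (Y i))]
    exact Finset.sum_congr rfl fun k _ => by rw [hYk k]
  -- values of Y on the three ranges
  have hYtop : ∀ i ∈ Ioc 0 l1, Y i = ybar := by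
    intro i hi
    simp only [Finset.mem_Ioc] at hi
    have hin : 1 ≤ i ∧ i ≤ n := ⟨by omega, by omega⟩
    rw [hY]; simp only []; rw [dif_pos hin]
    exact FactB _ (show i - 1 < l1 by omega)
  have hYmid : ∀ i ∈ Ioc l1 l2, Y i = c := by
    intro i hi
    simp only [Finset.mem_Ioc] at hi
    have hlt : l1 < l2 := by omega
    have hin : 1 ≤ i ∧ i ≤ n := ⟨by omega, by omega⟩
    rw [hY]; simp only []; rw [dif_pos hin, hcdef, dif_pos hlt]
    apply hCC
    · exact FactD _ (show i - 1 < l2 by omega)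
    · exact hl1mem _ (show l1 ≤ i - 1 by omega)
    · exact FactD _ (show l1 < l2 from hlt)
    · exact hl1mem _ (show l1 ≤ l1 from le_rfl)
  have hYbot : ∀ i ∈ Ioc l2 n, Y i = 0 := by
    intro i hi
    simp only [Finset.mem_Ioc] at hi
    have hin : 1 ≤ i ∧ i ≤ n := ⟨by omega, by omega⟩
    rw [hY]; simp only []; rw [dif_pos hin]
    exact FactC _ (show l2 ≤ i - 1 by omega)
  have hc0 : 0 ≤ c := by
    rw [hcdef]
    by_cases hlt : l1 < l2
    · rw [dif_pos hlt]; exact (FactD _ (show l1 < l2 from hlt)).le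
    · rw [dif_neg hlt]
  have hc1 : c ≤ ybar := by
    rw [hcdef]
    by_cases hlt : l1 < l2
    · rw [dif_pos hlt]; exact (hl1mem _ (show l1 ≤ l1 from le_rfl)).le
    · rw [dif_neg hlt]; exact hybar.le
  -- abbreviations
  set H1 : ℝ := ∑ i ∈ Icc 1 l1, lossW W N i with hH1
  set Δ : ℝ := ∑ i ∈ Icc (l1+1) l2, lossW W N i with hΔ
  have hIcc1 : (Icc 1 l1 : Finset ℕ) = Ioc 0 l1 := Finset.Icc_add_one_left_eq_Ioc 0 l1
  have hIccm : (Icc (l1+1) l2 : Finset ℕ) = Ioc l1 l2 := Finset.Icc_add_one_left_eq_Ioc l1 l2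
  have hΔ0 : 0 ≤ Δ := by
    rw [hΔ]
    apply Finset.sum_nonneg
    intro i hi
    simp only [Finset.mem_Icc] at hi
    exact (hlosspos i (by omega) (by omega)).le
  -- value of the constraint
  have hv_eq : v = ybar * H1 + c * Δ := by
    have h1 : ∑ i ∈ Icc 1 n, lossW W N i * Y i = v := by
      rw [hsumErw (fun i t => lossW W N i * t)]
      exact hesum
    rw [sum_split3 h12 hl2n (fun i => lossW W N i * Y i)] at h1
    have e1 : ∑ i ∈ Ioc 0 l1, lossW W N i * Y i = ybar * H1 := by
      rw [Finset.sum_congr rfl (fun i hi => by rw [hYtop i hi]), hH1, hIcc1,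
        Finset.mul_sum]
      exact Finset.sum_congr rfl fun i _ => mul_comm _ _
    have e2 : ∑ i ∈ Ioc l1 l2, lossW W N i * Y i = c * Δ := by
      rw [Finset.sum_congr rfl (fun i hi => by rw [hYmid i hi]), hΔ, hIccm,
        Finset.mul_sum]
      exact Finset.sum_congr rfl fun i _ => mul_comm _ _
    have e3 : ∑ i ∈ Ioc l2 n, lossW W N i * Y i = 0 := by
      apply Finset.sum_eq_zero
      intro i hi
      rw [hYbot i hi, mul_zero]
    rw [e1, e2, e3] at h1
    linarith
  -- value of the objective
  have hf : ∑ k : Fin n, (e k / lam) ^ (1/β) =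
      (l1:ℝ) * (ybar/lam)^(1/β) + ((l2:ℝ)-(l1:ℝ)) * (c/lam)^(1/β) := by
    rw [← hsumErw (fun i t => (t / lam) ^ (1/β)),
      sum_split3 h12 hl2n (fun i => (Y i / lam) ^ (1/β))]
    have t1 : ∑ i ∈ Ioc 0 l1, (Y i / lam)^(1/β) = (l1:ℝ) * (ybar/lam)^(1/β) := by
      rw [Finset.sum_congr rfl (fun i hi => by rw [hYtop i hi]), Finset.sum_const,
        Nat.card_Ioc, nsmul_eq_mul]
      norm_num
    have t2 : ∑ i ∈ Ioc l1 l2, (Y i / lam)^(1/β) = ((l2:ℝ)-(l1:ℝ)) * (c/lam)^(1/β) := by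
      rw [Finset.sum_congr rfl (fun i hi => by rw [hYmid i hi]), Finset.sum_const,
        Nat.card_Ioc, nsmul_eq_mul, Nat.cast_sub h12]
    have t3 : ∑ i ∈ Ioc l2 n, (Y i / lam)^(1/β) = 0 := by
      apply Finset.sum_eq_zero
      intro i hi
      rw [hYbot i hi, zero_div, Real.zero_rpow hpne]
    rw [t1, t2, t3, add_zero]
  -- now pick the pair
  by_cases hlt : l1 < l2
  · -- pair (l1, l2)
    have hΔpos : 0 < Δ := by
      rw [hΔ]
      apply Finset.sum_pos
      · intro i hi
        simp only [Finset.mem_Icc] at hi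
        exact hlosspos i (by omega) (by omega)
      · exact Finset.nonempty_Icc.mpr (by omega)
    refine ⟨l1, l2, hlt, hl2n, ?_, ?_, ?_⟩
    · nlinarith
    · rw [sum_Icc_split l1 l2 h12 (lossW W N), ← hH1, ← hΔ]
      nlinarith
    · have hratio : (v - ybar * H1) / (lam * Δ) = c / lam := by
        rw [hv_eq]
        field_simp
        ring
      rw [hf]
      rw [pairVal, ← hH1, ← hΔ, hratio]
      ring
  · -- l1 = l2
    have hle : l1 = l2 := le_antisymm h12 (not_lt.mp hlt)
    have hΔz : Δ = 0 := by
      rw [hΔ, ← hle, Finset.Icc_eq_empty (by omega), Finset.sum_empty]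
    have hveq : v = ybar * H1 := by rw [hv_eq, hΔz]; ring
    by_cases hl0 : 1 ≤ l1
    · -- pair (l1 - 1, l1)
      have hsplit : ∑ i ∈ Icc 1 l1, lossW W N i =
          (∑ i ∈ Icc 1 (l1-1), lossW W N i) + ∑ i ∈ Icc (l1-1+1) l1, lossW W N i :=
        sum_Icc_split (l1-1) l1 (by omega) (lossW W N)
      have hIccll : (Icc (l1-1+1) l1 : Finset ℕ) = {l1} := by
        have h' : l1 - 1 + 1 = l1 := by omega
        rw [h', Finset.Icc_self]
      have hlossl1 : 0 < lossW W N l1 := hlosspos l1 hl0 hl1n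
      refine ⟨l1 - 1, l1, by omega, hl1n, ?_, ?_, ?_⟩
      · rw [hveq, hH1, hsplit, hIccll, Finset.sum_singleton]
        nlinarith
      · rw [hveq, hH1]
      · have hratio : (v - ybar * ∑ i ∈ Icc 1 (l1-1), lossW W N i) /
            (lam * ∑ i ∈ Icc (l1-1+1) l1, lossW W N i) = ybar / lam := by
          rw [hveq, hH1, hsplit, hIccll, Finset.sum_singleton]
          rw [mul_add, add_sub_cancel_left]
          rw [div_eq_div_iff (by positivity) (by positivity)]
          ring
        rw [hf, ← hle, pairVal, hratio]
        have hcast : ((l1 - 1 : ℕ) : ℝ) = (l1 : ℝ) - 1 := by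
          rw [Nat.cast_sub hl0, Nat.cast_one]
        rw [hcast]
        ring
    · -- l1 = l2 = 0, pair (0, 1)
      have hl1z : l1 = 0 := by omega
      have hl2z : l2 = 0 := by omega
      have hH1z : H1 = 0 := by
        rw [hH1, hl1z, Finset.Icc_eq_empty (by omega), Finset.sum_empty]
      have hvz : v = 0 := by rw [hveq, hH1z, mul_zero]
      have hloss1 : 0 < lossW W N 1 := hlosspos 1 le_rfl hn1
      refine ⟨0, 1, by omega, hn1, ?_, ?_, ?_⟩
      · simp [Finset.Icc_eq_empty (show ¬ (1:ℕ) ≤ 0 by omega), hvz]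
      · rw [hvz]
        have h' : (Icc 1 1 : Finset ℕ) = {1} := Finset.Icc_self 1
        rw [h', Finset.sum_singleton]
        positivity
      · rw [hf, hl1z, hl2z, pairVal]
        have hz1 : (∑ i ∈ Icc 1 0, lossW W N i) = 0 := by
          rw [Finset.Icc_eq_empty (by omega), Finset.sum_empty]
        rw [hz1, hvz]
        have hbinv : (β : ℝ)⁻¹ ≠ 0 := by positivity
        simp [Real.zero_rpow, hbinv]


lemma convexOn_finset_sum {n : ℕ} {s : Set (Fin n → ℝ)} {ι : Type*} (t : Finset ι)
    (hs : Convex ℝ s) {f : ι → (Fin n → ℝ) → ℝ}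
    (h : ∀ i ∈ t, ConvexOn ℝ s (f i)) :
    ConvexOn ℝ s (fun x => ∑ i ∈ t, f i x) := by
  classical
  induction t using Finset.cons_induction with
  | empty => simpa using convexOn_const (0:ℝ) hs
  | cons i t hit ih =>
    simp only [Finset.sum_cons]
    exact (h i (Finset.mem_cons_self i t)).add (ih fun j hj => h j (Finset.mem_cons.mpr (Or.inr hj)))

/-- The main upper bound: on the polytope, the objective is bounded by the best pair value. -/
lemma kset_bound {W : ℝ → ℝ} {N n : ℕ} {β lam ybar v : ℝ}
    (hW : IsPWF W) (hn1 : 1 ≤ n) (hnN : n ≤ N)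
    (hβ0 : 0 < β) (hβ1 : β < 1) (hlam : 0 < lam) (hybar : 0 < ybar)
    (B : ℝ)
    (hB : ∀ l1 l2 : ℕ, l1 < l2 → l2 ≤ n →
      ybar * ∑ i ∈ Icc 1 l1, lossW W N i ≤ v →
      v ≤ ybar * ∑ i ∈ Icc 1 l2, lossW W N i →
      -(pairVal W N β lam ybar v l1 l2) ≤ B)
    {x : Fin n → ℝ} (hx : x ∈ Kset W N n ybar v) :
    ∑ k : Fin n, (x k / lam) ^ (1 / β) ≤ B := by
  classical
  have hp0 : (0:ℝ) < 1 / β := by positivity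
  have hp1 : (1:ℝ) ≤ 1 / β := by
    rw [le_div_iff₀ hβ0]; linarith
  -- convexity of the feasible set
  have hKconv : Convex ℝ (Kset W N n ybar v) := by
    intro z hz w hw a b ha hb hab
    obtain ⟨hz0, hz1, hzm, hzs⟩ := hz
    obtain ⟨hw0, hw1, hwm, hws⟩ := hw
    have happ : ∀ k, (a • z + b • w) k = a * z k + b * w k := by
      intro k; simp [Pi.add_apply, Pi.smul_apply, smul_eq_mul]
    refine ⟨?_, ?_, ?_, ?_⟩
    · intro k; rw [happ k]; have := hz0 k; have := hw0 k; positivity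
    · intro k; rw [happ k]
      have h1 := hz1 k; have h2 := hw1 k; have h3 := hz0 k; have h4 := hw0 k
      nlinarith
    · intro k l hkl
      rw [happ k, happ l]
      have h1 := hzm k l hkl; have h2 := hwm k l hkl
      nlinarith
    · have : ∑ k, lossW W N (k.1+1) * (a • z + b • w) k
          = a * (∑ k, lossW W N (k.1+1) * z k) + b * (∑ k, lossW W N (k.1+1) * w k) := by
        rw [Finset.mul_sum, Finset.mul_sum, ← Finset.sum_add_distrib]
        apply Finset.sum_congr rfl
        intro k _
        rw [happ k]; ring
      rw [this, hzs, hws]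
      have h5 : (a + b) * v = v := by rw [hab]; ring
      linarith
  -- closedness
  have hKcl : IsClosed (Kset W N n ybar v) := by
    have hrw : Kset W N n ybar v =
        (⋂ k, {x : Fin n → ℝ | 0 ≤ x k}) ∩ ((⋂ k, {x : Fin n → ℝ | x k ≤ ybar}) ∩
        ((⋂ q : {q : Fin n × Fin n // q.1 ≤ q.2}, {x : Fin n → ℝ | x q.1.2 ≤ x q.1.1}) ∩
        {x : Fin n → ℝ | ∑ k, lossW W N (k.1+1) * x k = v})) := by
      ext z
      simp only [Set.mem_inter_iff, Set.mem_iInter, Set.mem_setOf_eq, Kset]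
      constructor
      · rintro ⟨h1, h2, h3, h4⟩; exact ⟨h1, h2, fun q => h3 q.1.1 q.1.2 q.2, h4⟩
      · rintro ⟨h1, h2, h3, h4⟩; exact ⟨h1, h2, fun k l hkl => h3 ⟨(k, l), hkl⟩, h4⟩
    rw [hrw]
    refine IsClosed.inter (isClosed_iInter fun k =>
        isClosed_le continuous_const (continuous_apply k))
      (IsClosed.inter (isClosed_iInter fun k =>
        isClosed_le (continuous_apply k) continuous_const)
      (IsClosed.inter (isClosed_iInter fun q =>
        isClosed_le (continuous_apply q.1.2) (continuous_apply q.1.1)) ?_))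
    exact isClosed_eq (continuous_finset_sum _ fun k _ =>
      continuous_const.mul (continuous_apply k)) continuous_const
  -- compactness
  have hKsub : Kset W N n ybar v ⊆ Set.pi Set.univ (fun _ : Fin n => Set.Icc (0:ℝ) ybar) := by
    intro z hz k _
    exact ⟨hz.1 k, hz.2.1 k⟩
  have hKcomp : IsCompact (Kset W N n ybar v) :=
    (isCompact_univ_pi fun _ => isCompact_Icc).of_isClosed_subset hKcl hKsub
  -- convexity of the objective
  have hterm : ∀ k : Fin n, ConvexOn ℝ (Kset W N n ybar v)
      (fun z : Fin n → ℝ => (z k / lam) ^ (1/β)) := by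
    intro k
    refine ⟨hKconv, ?_⟩
    intro z hz w hw a b ha hb hab
    have h1 : ((a • z + b • w) k) / lam = a * (z k / lam) + b * (w k / lam) := by
      simp [Pi.add_apply, Pi.smul_apply, smul_eq_mul]; ring
    have h2 := (convexOn_rpow hp1).2 (Set.mem_Ici.mpr (div_nonneg (hz.1 k) hlam.le))
      (Set.mem_Ici.mpr (div_nonneg (hw.1 k) hlam.le)) ha hb hab
    simp only [smul_eq_mul] at h2 ⊢
    rw [h1]
    exact h2
  have hconv : ConvexOn ℝ (Kset W N n ybar v)
      (fun z : Fin n → ℝ => ∑ k, (z k / lam) ^ (1/β)) :=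
    convexOn_finset_sum _ hKconv fun k _ => hterm k
  -- continuity of the objective
  have hfc : Continuous (fun z : Fin n → ℝ => ∑ k, (z k / lam) ^ (1/β)) := by
    apply continuous_finset_sum
    intro k _
    exact ((continuous_apply k : Continuous fun z : Fin n → ℝ => z k).div_const lam).rpow_const (fun z => Or.inr hp0.le)
  -- Krein–Milman
  have hKM := closure_convexHull_extremePoints hKcomp hKconv
  have hhull : ∀ z ∈ convexHull ℝ ((Kset W N n ybar v).extremePoints ℝ),
      ∑ k : Fin n, (z k / lam) ^ (1/β) ≤ B := by
    intro z hz
    obtain ⟨e, heE, hfe⟩ := hconv.exists_ge_of_mem_convexHull extremePoints_subset hz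
    obtain ⟨l1, l2, a1, a2, a3, a4, hval⟩ := extreme_pair hW hn1 hnN hβ0 hlam hybar heE
    calc ∑ k : Fin n, (z k / lam) ^ (1/β) ≤ ∑ k : Fin n, (e k / lam) ^ (1/β) := hfe
      _ = -(pairVal W N β lam ybar v l1 l2) := hval
      _ ≤ B := hB l1 l2 a1 a2 a3 a4
  have hsub : Kset W N n ybar v ⊆ {z : Fin n → ℝ | ∑ k, (z k / lam) ^ (1/β) ≤ B} := by
    rw [← hKM]
    exact closure_minimal hhull (isClosed_le hfc continuous_const)
  exact hsub hx


/-- Every feasible pair value is attained by a feasible staircase point. -/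
lemma staircase_feasible {W : ℝ → ℝ} {N n : ℕ} {β lam ybar v : ℝ}
    (hW : IsPWF W) (hn1 : 1 ≤ n) (hnN : n ≤ N)
    (hβ0 : 0 < β) (hlam : 0 < lam) (hybar : 0 < ybar)
    (l1 l2 : ℕ) (h12 : l1 < l2) (h2n : l2 ≤ n)
    (hle1 : ybar * ∑ i ∈ Icc 1 l1, lossW W N i ≤ v)
    (hle2 : v ≤ ybar * ∑ i ∈ Icc 1 l2, lossW W N i) :
    ∃ y : ℕ → ℝ, PLossFeasible W N n ybar v y ∧
      -∑ i ∈ Icc 1 n, (y i / lam) ^ (1/β) = pairVal W N β lam ybar v l1 l2 := by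
  classical
  have hp0 : (0:ℝ) < 1 / β := by positivity
  have hpne : (1:ℝ) / β ≠ 0 := ne_of_gt hp0
  have hlosspos : ∀ i : ℕ, 1 ≤ i → i ≤ n → 0 < lossW W N i := fun i ha hb =>
    lossW_pos hW ha (le_trans hb hnN)
  set H1 : ℝ := ∑ i ∈ Icc 1 l1, lossW W N i with hH1
  set Δ : ℝ := ∑ i ∈ Icc (l1+1) l2, lossW W N i with hΔ
  have hΔpos : 0 < Δ := by
    rw [hΔ]
    apply Finset.sum_pos
    · intro i hi
      simp only [Finset.mem_Icc] at hi
      exact hlosspos i (by omega) (by omega)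
    · exact Finset.nonempty_Icc.mpr (by omega)
  have hsplitH : (∑ i ∈ Icc 1 l2, lossW W N i) = H1 + Δ := by
    rw [sum_Icc_split l1 l2 (le_of_lt h12) (lossW W N), ← hH1, ← hΔ]
  set c : ℝ := (v - ybar * H1) / Δ with hcdef
  have hc0 : 0 ≤ c := div_nonneg (by linarith) hΔpos.le
  have hc1 : c ≤ ybar := by
    rw [hcdef, div_le_iff₀ hΔpos]
    rw [hsplitH] at hle2
    nlinarith
  have hcΔ : c * Δ = v - ybar * H1 := div_mul_cancel₀ _ (ne_of_gt hΔpos)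
  set y : ℕ → ℝ := fun i => if i ≤ l1 then ybar else if i ≤ l2 then c else 0 with hy
  have hyval : ∀ i : ℕ, y i = if i ≤ l1 then ybar else if i ≤ l2 then c else 0 :=
    fun i => rfl
  have hIcc1 : (Icc 1 l1 : Finset ℕ) = Ioc 0 l1 := Finset.Icc_add_one_left_eq_Ioc 0 l1
  have hIccm : (Icc (l1+1) l2 : Finset ℕ) = Ioc l1 l2 := Finset.Icc_add_one_left_eq_Ioc l1 l2
  refine ⟨y, ⟨?_, ?_, ?_, ?_⟩, ?_⟩
  · rw [hyval 1]
    split_ifs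
    · exact le_rfl
    · exact hc1
    · exact hybar.le
  · rw [hyval n]
    split_ifs
    · exact hybar.le
    · exact hc0
    · exact le_rfl
  · intro i hi
    simp only [Finset.mem_Icc] at hi
    rw [hyval i, hyval (i+1)]
    split_ifs <;> first
      | exact le_rfl
      | linarith
      | omega
  · rw [sum_split3 (le_of_lt h12) h2n (fun i => lossW W N i * y i)]
    have e1 : ∑ i ∈ Ioc 0 l1, lossW W N i * y i = ybar * H1 := by
      rw [hH1, hIcc1, Finset.mul_sum]
      apply Finset.sum_congr rfl
      intro i hi
      simp only [Finset.mem_Ioc] at hi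
      rw [hyval i, if_pos hi.2]
      ring
    have e2 : ∑ i ∈ Ioc l1 l2, lossW W N i * y i = c * Δ := by
      rw [hΔ, hIccm, Finset.mul_sum]
      apply Finset.sum_congr rfl
      intro i hi
      simp only [Finset.mem_Ioc] at hi
      rw [hyval i, if_neg (by omega), if_pos hi.2]
      ring
    have e3 : ∑ i ∈ Ioc l2 n, lossW W N i * y i = 0 := by
      apply Finset.sum_eq_zero
      intro i hi
      simp only [Finset.mem_Ioc] at hi
      rw [hyval i, if_neg (by omega), if_neg (by omega), mul_zero]
    rw [e1, e2, e3, hcΔ]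
    ring
  · rw [sum_split3 (le_of_lt h12) h2n (fun i => (y i / lam) ^ (1/β))]
    have t1 : ∑ i ∈ Ioc 0 l1, (y i / lam) ^ (1/β) = (l1:ℝ) * (ybar/lam)^(1/β) := by
      have : ∀ i ∈ Ioc 0 l1, (y i / lam) ^ (1/β) = (ybar/lam)^(1/β) := by
        intro i hi
        simp only [Finset.mem_Ioc] at hi
        rw [hyval i, if_pos hi.2]
      rw [Finset.sum_congr rfl this, Finset.sum_const, Nat.card_Ioc, nsmul_eq_mul]
      norm_num
    have t2 : ∑ i ∈ Ioc l1 l2, (y i / lam) ^ (1/β) = ((l2:ℝ)-(l1:ℝ)) * (c/lam)^(1/β) := by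
      have : ∀ i ∈ Ioc l1 l2, (y i / lam) ^ (1/β) = (c/lam)^(1/β) := by
        intro i hi
        simp only [Finset.mem_Ioc] at hi
        rw [hyval i, if_neg (by omega), if_pos hi.2]
      rw [Finset.sum_congr rfl this, Finset.sum_const, Nat.card_Ioc, nsmul_eq_mul,
        Nat.cast_sub (le_of_lt h12)]
    have t3 : ∑ i ∈ Ioc l2 n, (y i / lam) ^ (1/β) = 0 := by
      apply Finset.sum_eq_zero
      intro i hi
      simp only [Finset.mem_Ioc] at hi
      rw [hyval i, if_neg (by omega), if_neg (by omega), zero_div,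
        Real.zero_rpow hpne]
    rw [t1, t2, t3, add_zero]
    have hratio : (v - ybar * H1) / (lam * Δ) = c / lam := by
      rw [hcdef, div_div, mul_comm Δ lam]
    rw [pairVal, ← hH1, ← hΔ, hratio]
    ring

theorem ploss_optimal_value (W : ℝ → ℝ) (N n : ℕ) (β lam ybar v : ℝ)
    (hW : IsPWF W) (hn1 : 1 ≤ n) (hnN : n ≤ N)
    (hβ0 : 0 < β) (hβ1 : β < 1) (hlam : 0 < lam) (hybar : 0 < ybar)
    (hv0 : 0 ≤ v) (hv1 : v ≤ ybar * ∑ i ∈ Finset.Icc 1 n, lossW W N i) :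
    ∃ m : ℝ,
      IsLeast {S : ℝ | ∃ y : ℕ → ℝ, PLossFeasible W N n ybar v y ∧
          S = -∑ i ∈ Finset.Icc 1 n, (y i / lam) ^ (1 / β)} m ∧
      IsLeast {S : ℝ | ∃ l1 l2 : ℕ, l1 < l2 ∧ l2 ≤ n ∧
          ybar * ∑ i ∈ Finset.Icc 1 l1, lossW W N i ≤ v ∧
          v ≤ ybar * ∑ i ∈ Finset.Icc 1 l2, lossW W N i ∧
          S = -(l1 : ℝ) * (ybar / lam) ^ (1 / β) -
            ((l2 : ℝ) - (l1 : ℝ)) *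
              ((v - ybar * ∑ i ∈ Finset.Icc 1 l1, lossW W N i) /
                (lam * ∑ i ∈ Finset.Icc (l1 + 1) l2, lossW W N i)) ^ (1 / β)} m := by
  classical
  set P : Finset (ℕ × ℕ) := ((Finset.range (n+1)) ×ˢ (Finset.range (n+1))).filter
    (fun q => q.1 < q.2 ∧ q.2 ≤ n ∧ ybar * ∑ i ∈ Icc 1 q.1, lossW W N i ≤ v ∧
      v ≤ ybar * ∑ i ∈ Icc 1 q.2, lossW W N i) with hP
  have hPmem : ∀ q : ℕ × ℕ, q ∈ P ↔ (q.1 < q.2 ∧ q.2 ≤ n ∧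
      ybar * ∑ i ∈ Icc 1 q.1, lossW W N i ≤ v ∧
      v ≤ ybar * ∑ i ∈ Icc 1 q.2, lossW W N i) := by
    intro q
    rw [hP]
    simp only [Finset.mem_filter, Finset.mem_product, Finset.mem_range]
    constructor
    · rintro ⟨-, h⟩; exact h
    · intro h; exact ⟨⟨by omega, by omega⟩, h⟩
  have hPne : P.Nonempty := by
    refine ⟨(0, n), (hPmem (0, n)).mpr ⟨hn1, le_rfl, ?_, hv1⟩⟩
    have h0 : (∑ i ∈ Icc 1 0, lossW W N i) = 0 := by
      rw [Finset.Icc_eq_empty (by omega), Finset.sum_empty]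
    simp only [h0, mul_zero]
    exact hv0
  obtain ⟨q0, hq0P, hq0min⟩ :=
    Finset.exists_min_image P (fun q => pairVal W N β lam ybar v q.1 q.2) hPne
  obtain ⟨hq012, hq02n, hq0le1, hq0le2⟩ := (hPmem q0).mp hq0P
  refine ⟨pairVal W N β lam ybar v q0.1 q0.2, ⟨?_, ?_⟩, ⟨?_, ?_⟩⟩
  · -- membership in the continuous set
    obtain ⟨y, hyF, hyval⟩ := staircase_feasible hW hn1 hnN hβ0 hlam hybar
      q0.1 q0.2 hq012 hq02n hq0le1 hq0le2
    exact ⟨y, hyF, hyval.symm⟩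
  · -- lower bound for the continuous set
    rintro S ⟨y, hyF, rfl⟩
    obtain ⟨hy1, hyn, hystep, hysum⟩ := hyF
    have hchain := chain_mono hystep
    have hxK : (fun k : Fin n => y (k.1+1)) ∈ Kset W N n ybar v := by
      refine ⟨?_, ?_, ?_, ?_⟩
      · intro k
        exact le_trans hyn (hchain (k.1+1) n (by omega) (by have := k.2; omega) le_rfl)
      · intro k
        exact le_trans (hchain 1 (k.1+1) le_rfl (by omega) (by have := k.2; omega)) hy1
      · intro k l hkl
        exact hchain (k.1+1) (l.1+1) (by omega)
          (by have := Fin.le_def.mp hkl; omega) (by have := l.2; omega)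
      · rw [← sum_Icc_one_eq_sum_fin n (fun i => lossW W N i * y i)]
        exact hysum
    have hbound : ∑ k : Fin n, (y (k.1+1) / lam) ^ (1/β) ≤
        -(pairVal W N β lam ybar v q0.1 q0.2) :=
      kset_bound hW hn1 hnN hβ0 hβ1 hlam hybar
        (-(pairVal W N β lam ybar v q0.1 q0.2))
        (fun l1 l2 a1 a2 a3 a4 => by
          have := hq0min (l1, l2) ((hPmem (l1, l2)).mpr ⟨a1, a2, a3, a4⟩)
          linarith) hxK
    have hsum : ∑ i ∈ Icc 1 n, (y i / lam) ^ (1/β) =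
        ∑ k : Fin n, (y (k.1+1) / lam) ^ (1/β) :=
      sum_Icc_one_eq_sum_fin n (fun i => (y i / lam) ^ (1/β))
    rw [hsum]
    linarith
  · -- membership in the discrete set
    exact ⟨q0.1, q0.2, hq012, hq02n, hq0le1, hq0le2, rfl⟩
  · -- lower bound for the discrete set
    rintro S ⟨l1, l2, a1, a2, a3, a4, rfl⟩
    exact hq0min (l1, l2) ((hPmem (l1, l2)).mpr ⟨a1, a2, a3, a4⟩)
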